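/- Let F be a field and (A,B) an m×n matrix pencil over F with minimal ranks ρ(A,B) = (r,s). If r' ≥ s' are nonnegative integers, then (A,B) ∈ B_{r',s'} if and only if r' ≥ r and s' ≥ s. -/
import Mathlib


open Matrix

/-- `(A', B')` lies in the orbit of the pencil `(A, B)` under the action of
`GL_m(F) × GL_n(F) × GL_2(F)` given by
`(P, U, T) · (A, B) = (P (t₁₁ A + t₁₂ B) Uᵀ, P (t₂₁ A + t₂₂ B) Uᵀ)`. -/
def InOrbit {F : Type*} [Field F] {m n : ℕ}
    (A B A' B' : Matrix (Fin m) (Fin n) F) : Prop :=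
  ∃ (P : Matrix (Fin m) (Fin m) F) (U : Matrix (Fin n) (Fin n) F)
    (T : Matrix (Fin 2) (Fin 2) F),
    IsUnit P.det ∧ IsUnit U.det ∧ IsUnit T.det ∧
    A' = P * (T 0 0 • A + T 0 1 • B) * U.transpose ∧
    B' = P * (T 1 0 • A + T 1 1 • B) * U.transpose

/-- The pencil `(A, B)` belongs to `B_{r,s}`: some pencil in its orbit has
first coefficient of rank `≤ r` and second coefficient of rank `≤ s`. -/
def InBset {F : Type*} [Field F] {m n : ℕ} (r s : ℕ)
    (A B : Matrix (Fin m) (Fin n) F) : Prop :=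
  ∃ A' B', InOrbit A B A' B' ∧ A'.rank ≤ r ∧ B'.rank ≤ s


/-- The pencil `(A, B)` has minimal ranks `ρ(A, B) = (r, s)`:
`s` is the minimum of `rank (t A + u B)` over `(t, u) ≠ (0, 0)`, attained at
some `(t₀, u₀)`, and `r` is the minimum of `rank (t A + u B)` over `(t, u)`
outside the span of the minimizer `(t₀, u₀)`. -/
def MinRanksAre {F : Type*} [Field F] {m n : ℕ}
    (A B : Matrix (Fin m) (Fin n) F) (r s : ℕ) : Prop :=
  ∃ t₀ u₀ : F, (t₀, u₀) ≠ 0 ∧ (t₀ • A + u₀ • B).rank = s ∧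
    (∀ t u : F, (t, u) ≠ 0 → s ≤ (t • A + u • B).rank) ∧
    (∃ t₁ u₁ : F, ((t₁, u₁) : F × F) ∉ Submodule.span F {((t₀, u₀) : F × F)} ∧
      (t₁ • A + u₁ • B).rank = r) ∧
    (∀ t u : F, ((t, u) : F × F) ∉ Submodule.span F {((t₀, u₀) : F × F)} →
      r ≤ (t • A + u • B).rank)

/-- If `ρ(A, B) = (r, s)` and `r' ≥ s'`, then `(A, B) ∈ B_{r',s'}` if and only
if `r' ≥ r` and `s' ≥ s`. -/
theorem mem_Bset_iff_minRanks_le {F : Type*} [Field F] {m n : ℕ}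
    (A B : Matrix (Fin m) (Fin n) F) (r s r' s' : ℕ)
    (h : MinRanksAre A B r s) (h' : s' ≤ r') :
    InBset r' s' A B ↔ (r ≤ r' ∧ s ≤ s') := by
  obtain ⟨t₀, u₀, h0, hs, hsmin, ⟨t₁, u₁, h1, hr⟩, hrmin⟩ := h
  constructor
  · rintro ⟨A', B', ⟨P, U, T, hP, hU, hT, hA', hB'⟩, hrA, hrB⟩
    rw [hA', Matrix.rank_mul_eq_left_of_isUnit_det _ _ (by simpa using hU),
      Matrix.rank_mul_eq_right_of_isUnit_det _ _ hP] at hrA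
    rw [hB', Matrix.rank_mul_eq_left_of_isUnit_det _ _ (by simpa using hU),
      Matrix.rank_mul_eq_right_of_isUnit_det _ _ hP] at hrB
    have hTdet : T 0 0 * T 1 1 - T 0 1 * T 1 0 ≠ 0 := by
      rw [← Matrix.det_fin_two]
      exact hT.ne_zero
    have hrow1 : ((T 1 0, T 1 1) : F × F) ≠ 0 := by
      intro hzero
      have h10 : T 1 0 = 0 := congrArg Prod.fst hzero
      have h11 : T 1 1 = 0 := congrArg Prod.snd hzero
      apply hTdet; rw [h10, h11]; ring
    refine ⟨?_, le_trans (hsmin _ _ hrow1) hrB⟩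
    by_cases hmem : ((T 0 0, T 0 1) : F × F) ∈ Submodule.span F {((t₀, u₀) : F × F)}
    · obtain ⟨c, hc⟩ := Submodule.mem_span_singleton.mp hmem
      have hnotmem : ((T 1 0, T 1 1) : F × F) ∉ Submodule.span F {((t₀, u₀) : F × F)} := by
        intro hmem'
        obtain ⟨d, hd⟩ := Submodule.mem_span_singleton.mp hmem'
        have hc0 : c * t₀ = T 0 0 := congrArg Prod.fst hc
        have hc1 : c * u₀ = T 0 1 := congrArg Prod.snd hc
        have hd0 : d * t₀ = T 1 0 := congrArg Prod.fst hd
        have hd1 : d * u₀ = T 1 1 := congrArg Prod.snd hd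
        apply hTdet
        rw [← hc0, ← hc1, ← hd0, ← hd1]; ring
      exact le_trans (le_trans (hrmin _ _ hnotmem) hrB) h'
    · exact le_trans (hrmin _ _ hmem) hrA
  · rintro ⟨hr', hs'⟩
    have hdet : IsUnit (!![t₁, u₁; t₀, u₀] : Matrix (Fin 2) (Fin 2) F).det := by
      rw [Matrix.det_fin_two_of, isUnit_iff_ne_zero]
      intro hz
      apply h1
      rw [Submodule.mem_span_singleton]
      rcases (by
        by_contra hcon
        push_neg at hcon
        exact h0 (Prod.ext hcon.1 hcon.2) : t₀ ≠ 0 ∨ u₀ ≠ 0) with ht₀ | hu₀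
      · refine ⟨t₁ / t₀, Prod.ext ?_ ?_⟩
        · show t₁ / t₀ * t₀ = t₁
          field_simp
        · show t₁ / t₀ * u₀ = u₁
          field_simp
          linear_combination hz
      · refine ⟨u₁ / u₀, Prod.ext ?_ ?_⟩
        · show u₁ / u₀ * t₀ = t₁
          field_simp
          linear_combination -hz
        · show u₁ / u₀ * u₀ = u₁
          field_simp
    exact ⟨t₁ • A + u₁ • B, t₀ • A + u₀ • B,
      ⟨1, 1, !![t₁, u₁; t₀, u₀], by simp, by simp, hdet, by simp, by simp⟩,
      hr ▸ hr', hs ▸ hs'⟩
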